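/- Let G be a countable abelian group with 2G infinite and let Φ be a Følner sequence in G that is not quasi-invariant with respect to doubling (i.e., lim inf |Φ_N/2 ∩ Φ_N|/|Φ_N| = 0). Then there exists A ⊆ G with upper density 1 along Φ such that for every t ∈ G and every infinite B ⊆ G, t + B + B is not contained in A. -/

import Mathlib

open Filter Pointwise
open scoped Classical

/-- The doubling map `g ↦ g + g` as an additive homomorphism. -/
def doubleHom (G : Type*) [AddCommGroup G] : G →+ G where
  toFun g := g + g
  map_zero' := by simp
  map_add' := by intro a b; abel

/-- The subgroup `2G = {g + g : g ∈ G}`. -/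
def twoG (G : Type*) [AddCommGroup G] : AddSubgroup G := (doubleHom G).range

/-- A Følner sequence: finite sets with `|Φ_N ∩ (g + Φ_N)|/|Φ_N| → 1` for every `g`. -/
def IsFolner {G : Type*} [AddCommGroup G] (Φ : ℕ → Finset G) : Prop :=
  ∀ g : G, Tendsto
    (fun N => (((Φ N) ∩ (Φ N).image (fun x => g + x)).card : ℝ) / ((Φ N).card : ℝ))
    atTop (nhds 1)

set_option maxHeartbeats 1000000
set_option linter.unusedSectionVars false

def seqData (step : List ℕ → ℕ) : ℕ → List ℕ
  | 0 => []
  | n + 1 => seqData step n ++ [step (seqData step n)]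

lemma seqData_eq (step : List ℕ → ℕ) (n : ℕ) :
    seqData step n = (List.range n).map (fun k => step (seqData step k)) := by
  induction n with
  | zero => rfl
  | succ n ih => rw [seqData, List.range_succ, List.map_append, ← ih]; rfl

lemma mem_le_foldr_max (l : List ℕ) (m : ℕ) (hm : m ∈ l) : m ≤ l.foldr max 0 := by
  induction l with
  | nil => simp at hm
  | cons a l ih =>
    rcases List.mem_cons.mp hm with rfl | h
    · exact le_max_left _ _
    · exact le_trans (ih h) (le_max_right _ _)


section Aux
variable {G : Type*} [AddCommGroup G] {Φ : ℕ → Finset G}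

lemma card_pos_ev (hΦ : IsFolner Φ) : ∀ᶠ N in atTop, 0 < (Φ N).card := by
  have h := (hΦ 0).eventually (eventually_gt_nhds (by norm_num : (1:ℝ)/2 < 1))
  filter_upwards [h] with N hN
  by_contra hc
  push_neg at hc
  interval_cases h' : (Φ N).card
  · simp [h'] at hN; norm_num at hN

lemma folner_err (hΦ : IsFolner Φ) (g : G) :
    Tendsto (fun N => ((((Φ N).image (fun x => g + x)) \ Φ N).card : ℝ) / ((Φ N).card : ℝ))
      atTop (nhds 0) := by
  have hev : ∀ᶠ N in atTop,
      ((((Φ N).image (fun x => g + x)) \ Φ N).card : ℝ) / ((Φ N).card : ℝ)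
        = 1 - (((Φ N) ∩ (Φ N).image (fun x => g + x)).card : ℝ) / ((Φ N).card : ℝ) := by
    filter_upwards [card_pos_ev hΦ] with N hN
    have hc : ((Φ N).card : ℝ) ≠ 0 := by
      exact_mod_cast hN.ne'
    have himg : ((Φ N).image (fun x => g + x)).card = (Φ N).card :=
      Finset.card_image_of_injective _ (add_right_injective g)
    have hkey : (((Φ N).image (fun x => g + x)) \ Φ N).card
        + ((Φ N) ∩ (Φ N).image (fun x => g + x)).card = (Φ N).card := by
      rw [Finset.inter_comm]
      rw [Finset.card_sdiff_add_card_inter, himg]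
    have hkey' : ((((Φ N).image (fun x => g + x)) \ Φ N).card : ℝ)
        = ((Φ N).card : ℝ) - (((Φ N) ∩ (Φ N).image (fun x => g + x)).card : ℝ) := by
      have := congrArg (fun n : ℕ => (n : ℝ)) hkey
      push_cast at this
      linarith
    rw [hkey']
    field_simp
  have h2 : Tendsto (fun N => 1 - (((Φ N) ∩ (Φ N).image (fun x => g + x)).card : ℝ) / ((Φ N).card : ℝ))
      atTop (nhds 0) := by
    have := (tendsto_const_nhds (x := (1:ℝ)) (f := atTop)).sub (hΦ g)
    simpa using this
  exact Tendsto.congr' (hev.mono fun N h => h.symm) h2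


lemma fiber_small (hΦ : IsFolner Φ) (φ : G →+ G) (hφ : (Set.range φ).Infinite) (z : G) :
    Tendsto (fun N => (((Φ N).filter (fun x => φ x = z)).card : ℝ) / ((Φ N).card : ℝ))
      atTop (nhds 0) := by
  rw [Metric.tendsto_nhds]
  intro ε hε
  set k : ℕ := ⌈2/ε⌉₊ + 1 with hk
  have hkpos : 0 < (k:ℝ) := by positivity
  have hkge : (2:ℝ)/ε + 1 ≤ (k:ℝ) := by
    rw [hk]; push_cast
    have := Nat.le_ceil (2/ε)
    linarith
  -- choose shifts with distinct φ-values
  set e := Set.Infinite.natEmbedding _ hφ with he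
  have hu : ∀ i : ℕ, ∃ x : G, φ x = ((e i : G)) := fun i => (e i).2
  choose u hu2 using hu
  have huinj : ∀ i j : ℕ, φ (u i) = φ (u j) → i = j := by
    intro i j hij
    have : (e i : G) = (e j : G) := by rw [← hu2 i, ← hu2 j, hij]
    exact e.injective (Subtype.ext this)
  have hε2k : 0 < ε/(2*(k:ℝ)) := by positivity
  have hall : ∀ᶠ N in atTop, ∀ i ∈ Finset.range k,
      ((((Φ N).image (fun x => u i + x)) \ Φ N).card : ℝ) / ((Φ N).card : ℝ) < ε/(2*(k:ℝ)) := by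
    rw [Filter.eventually_all_finset]
    intro i _
    exact (folner_err hΦ (u i)).eventually (eventually_lt_nhds hε2k)
  filter_upwards [card_pos_ev hΦ, hall] with N hc hallN
  have hcR : (0:ℝ) < ((Φ N).card : ℝ) := by exact_mod_cast hc
  set Fl := (Φ N).filter (fun x => φ x = z) with hFl
  set V : ℕ → Finset G := fun i => Fl.image (fun x => x + u i) with hV
  have hVcard : ∀ i, (V i).card = Fl.card := fun i =>
    Finset.card_image_of_injective _ (add_left_injective (u i))
  have hdisj : ∀ i ∈ Finset.range k, ∀ j ∈ Finset.range k, i ≠ j → Disjoint (V i) (V j) := by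
    intro i _ j _ hij
    rw [Finset.disjoint_left]
    rintro y hyi hyj
    simp only [hV, Finset.mem_image, hFl, Finset.mem_filter] at hyi hyj
    obtain ⟨a, ⟨-, ha⟩, rfl⟩ := hyi
    obtain ⟨b, ⟨-, hb⟩, hab⟩ := hyj
    apply hij
    apply huinj
    have := congrArg φ hab
    rw [map_add, map_add, ha, hb] at this
    exact (add_right_injective z this).symm
  have hbi : ((Finset.range k).biUnion V).card = k * Fl.card := by
    rw [Finset.card_biUnion hdisj]
    simp [hVcard, Finset.sum_const]
  have hsub : (Finset.range k).biUnion V ⊆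
      Φ N ∪ (Finset.range k).biUnion (fun i => ((Φ N).image (fun x => u i + x)) \ Φ N) := by
    intro y hy
    simp only [Finset.mem_biUnion] at hy
    obtain ⟨i, hi, hyV⟩ := hy
    simp only [hV, Finset.mem_image, hFl, Finset.mem_filter] at hyV
    obtain ⟨a, ⟨haΦ, -⟩, rfl⟩ := hyV
    by_cases hmem : a + u i ∈ Φ N
    · exact Finset.mem_union_left _ hmem
    · apply Finset.mem_union_right
      simp only [Finset.mem_biUnion]
      refine ⟨i, hi, ?_⟩
      rw [Finset.mem_sdiff]
      refine ⟨?_, hmem⟩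
      rw [Finset.mem_image]
      exact ⟨a, haΦ, by rw [add_comm]⟩
  have hcount : (k:ℝ) * (Fl.card : ℝ) ≤ ((Φ N).card : ℝ)
      + ∑ i ∈ Finset.range k, ((((Φ N).image (fun x => u i + x)) \ Φ N).card : ℝ) := by
    have h1 : ((Finset.range k).biUnion V).card
        ≤ (Φ N).card + ∑ i ∈ Finset.range k, (((Φ N).image (fun x => u i + x)) \ Φ N).card := by
      calc ((Finset.range k).biUnion V).card
          ≤ (Φ N ∪ (Finset.range k).biUnion (fun i => ((Φ N).image (fun x => u i + x)) \ Φ N)).card :=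
            Finset.card_le_card hsub
        _ ≤ (Φ N).card + ((Finset.range k).biUnion (fun i => ((Φ N).image (fun x => u i + x)) \ Φ N)).card :=
            Finset.card_union_le _ _
        _ ≤ _ := by
            gcongr
            exact Finset.card_biUnion_le
    rw [hbi] at h1
    exact_mod_cast h1
  have hsum : ∑ i ∈ Finset.range k, ((((Φ N).image (fun x => u i + x)) \ Φ N).card : ℝ)
      < (ε/2) * ((Φ N).card : ℝ) := by
    have : ∀ i ∈ Finset.range k, ((((Φ N).image (fun x => u i + x)) \ Φ N).card : ℝ)
        < ε/(2*(k:ℝ)) * ((Φ N).card : ℝ) := by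
      intro i hi
      have := hallN i hi
      rwa [div_lt_iff₀ hcR] at this
    calc ∑ i ∈ Finset.range k, ((((Φ N).image (fun x => u i + x)) \ Φ N).card : ℝ)
        < ∑ _i ∈ Finset.range k, ε/(2*(k:ℝ)) * ((Φ N).card : ℝ) :=
          Finset.sum_lt_sum_of_nonempty (by rw [hk]; exact Finset.nonempty_range_iff.mpr (Nat.succ_ne_zero _)) this
      _ = (ε/2) * ((Φ N).card : ℝ) := by
          rw [Finset.sum_const, Finset.card_range, nsmul_eq_mul]
          field_simp
  rw [Real.dist_eq, sub_zero, abs_of_nonneg (div_nonneg (Nat.cast_nonneg _) (Nat.cast_nonneg _))]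
  rw [div_lt_iff₀ hcR]
  have hεk : 1 + ε/2 < (k:ℝ) * ε := by
    have h2 : (2/ε + 1) * ε = 2 + ε := by field_simp
    have h3 := mul_le_mul_of_nonneg_right hkge hε.le
    rw [h2] at h3
    linarith
  nlinarith [hcR, hcount, hsum, Fl.card.cast_nonneg (α := ℝ)]

lemma fibers_small (hΦ : IsFolner Φ) (φ : G →+ G) (hφ : (Set.range φ).Infinite) (Z : Finset G) :
    Tendsto (fun N => (((Φ N).filter (fun x => φ x ∈ Z)).card : ℝ) / ((Φ N).card : ℝ))
      atTop (nhds 0) := by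
  have hle : ∀ N, (((Φ N).filter (fun x => φ x ∈ Z)).card : ℝ) / ((Φ N).card : ℝ)
      ≤ ∑ z ∈ Z, (((Φ N).filter (fun x => φ x = z)).card : ℝ) / ((Φ N).card : ℝ) := by
    intro N
    rw [← Finset.sum_div]
    rcases Nat.eq_zero_or_pos (Φ N).card with h0 | hpos
    · simp [h0]
    · have hcard : (((Φ N).filter (fun x => φ x ∈ Z)).card : ℝ)
          ≤ ∑ z ∈ Z, (((Φ N).filter (fun x => φ x = z)).card : ℝ) := by
        have hsub : (Φ N).filter (fun x => φ x ∈ Z)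
            ⊆ Z.biUnion (fun z => (Φ N).filter (fun x => φ x = z)) := by
          intro x hx
          rw [Finset.mem_filter] at hx
          rw [Finset.mem_biUnion]
          exact ⟨φ x, hx.2, by rw [Finset.mem_filter]; exact ⟨hx.1, rfl⟩⟩
        have := (Finset.card_le_card hsub).trans Finset.card_biUnion_le
        exact_mod_cast this
      gcongr
  have hnn : ∀ N, 0 ≤ (((Φ N).filter (fun x => φ x ∈ Z)).card : ℝ) / ((Φ N).card : ℝ) := by
    intro N; positivity
  apply squeeze_zero hnn hle
  have hsum := tendsto_finset_sum Z (fun z _ => fiber_small hΦ φ hφ z)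
  simpa using hsum


lemma yside_card (Φ₀ : Finset G) (f : G) :
    (Φ₀.filter (fun x => ∃ w ∈ Φ₀, x = w + w - f)).card
      ≤ (Φ₀.filter (fun w => w + w ∈ Φ₀)).card + ((Φ₀.image (fun x => f + x)) \ Φ₀).card := by
  set S := Φ₀.filter (fun x => ∃ w ∈ Φ₀, x = w + w - f) with hS
  set D := Φ₀.image (fun w => w + w) with hD
  set I := Φ₀.image (fun x => f + x) with hI
  have h1 : S.image (fun x => x + f) ⊆ I ∩ D := by
    intro y hy
    obtain ⟨x, hx, rfl⟩ := Finset.mem_image.mp hy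
    rw [hS, Finset.mem_filter] at hx
    obtain ⟨hxΦ, w, hw, hxw⟩ := hx
    rw [Finset.mem_inter]
    constructor
    · rw [hI, Finset.mem_image]
      exact ⟨x, hxΦ, by rw [add_comm]⟩
    · rw [hD, Finset.mem_image]
      refine ⟨w, hw, ?_⟩
      rw [hxw]
      abel
  have h2 : I ∩ D ⊆ (Φ₀ ∩ D) ∪ (I \ Φ₀) := by
    intro y hy
    rw [Finset.mem_inter] at hy
    by_cases hmem : y ∈ Φ₀
    · exact Finset.mem_union_left _ (Finset.mem_inter.mpr ⟨hmem, hy.2⟩)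
    · exact Finset.mem_union_right _ (Finset.mem_sdiff.mpr ⟨hy.1, hmem⟩)
  have h3 : Φ₀ ∩ D ⊆ (Φ₀.filter (fun w => w + w ∈ Φ₀)).image (fun w => w + w) := by
    intro z hz
    rw [Finset.mem_inter, hD] at hz
    obtain ⟨hzΦ, hzD⟩ := hz
    obtain ⟨w, hw, rfl⟩ := Finset.mem_image.mp hzD
    rw [Finset.mem_image]
    exact ⟨w, Finset.mem_filter.mpr ⟨hw, hzΦ⟩, rfl⟩
  calc S.card = (S.image (fun x => x + f)).card :=
        (Finset.card_image_of_injective _ (add_left_injective f)).symm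
    _ ≤ (I ∩ D).card := Finset.card_le_card h1
    _ ≤ ((Φ₀ ∩ D) ∪ (I \ Φ₀)).card := Finset.card_le_card h2
    _ ≤ (Φ₀ ∩ D).card + (I \ Φ₀).card := Finset.card_union_le _ _
    _ ≤ (Φ₀.filter (fun w => w + w ∈ Φ₀)).card + (I \ Φ₀).card := by
        exact add_le_add_left ((Finset.card_le_card h3).trans Finset.card_image_le) _

lemma exists_good (hΦ : IsFolner Φ) [Infinite G]
    (h2 : (Set.range (doubleHom G)).Infinite)
    (hψ : liminf (fun N =>
      (((Φ N).filter (fun x => x + x ∈ Φ N)).card : ℝ) / ((Φ N).card : ℝ)) atTop = 0)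
    (M : ℕ) (F : Finset G) (ε : ℝ) (hε : 0 < ε) :
    ∃ N, M ≤ N ∧ 0 < (Φ N).card ∧
      ((((Φ N).filter (fun x => x + x ∈ Φ N)).card : ℝ) < ε * ((Φ N).card : ℝ)) ∧
      ((((Φ N).filter (fun x => doubleHom G x ∈ F + F)).card : ℝ) < ε * ((Φ N).card : ℝ)) ∧
      ((((Φ N).filter (fun x => (AddMonoidHom.id G) x ∈
          Finset.image₂ (fun u f => u + u - f) F F)).card : ℝ) < ε * ((Φ N).card : ℝ)) ∧
      (∀ f ∈ F, ((((Φ N).image (fun x => f + x)) \ Φ N).card : ℝ) < ε * ((Φ N).card : ℝ)) := by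
  have hratio : ∀ {a : ℝ} {n m : ℕ}, 0 < m → ((a : ℝ) ≤ 0 → False) → True := fun _ _ => trivial
  -- frequently ψ-ratio small
  have hcob : IsCoboundedUnder (· ≥ ·) atTop (fun N =>
      (((Φ N).filter (fun x => x + x ∈ Φ N)).card : ℝ) / ((Φ N).card : ℝ)) :=
    isCoboundedUnder_ge_of_le _ (x := 1) (fun N => by
      rcases Nat.eq_zero_or_pos (Φ N).card with h | h
      · simp [h]
      · exact div_le_one_of_le₀
          (by exact_mod_cast Finset.card_le_card (Finset.filter_subset _ _))
          (by positivity))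
  have hfreq : ∃ᶠ N in atTop,
      (((Φ N).filter (fun x => x + x ∈ Φ N)).card : ℝ) / ((Φ N).card : ℝ) < ε := by
    apply frequently_lt_of_liminf_lt hcob
    rw [hψ]; exact hε
  have hid : (Set.range (AddMonoidHom.id G)).Infinite := by
    have : Set.range (AddMonoidHom.id G) = Set.univ := by
      ext x; simp
    rw [this]
    exact Set.infinite_univ
  have hev : ∀ᶠ N in atTop, M ≤ N ∧ 0 < (Φ N).card ∧
      ((((Φ N).filter (fun x => doubleHom G x ∈ F + F)).card : ℝ) / ((Φ N).card : ℝ) < ε) ∧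
      ((((Φ N).filter (fun x => (AddMonoidHom.id G) x ∈
          Finset.image₂ (fun u f => u + u - f) F F)).card : ℝ) / ((Φ N).card : ℝ) < ε) ∧
      (∀ f ∈ F, ((((Φ N).image (fun x => f + x)) \ Φ N).card : ℝ) / ((Φ N).card : ℝ) < ε) := by
    have e1 := eventually_ge_atTop M
    have e2 := card_pos_ev hΦ
    have e3 := (fibers_small hΦ (doubleHom G) h2 (F + F)).eventually (eventually_lt_nhds hε)
    have e4 := (fibers_small hΦ (AddMonoidHom.id G) hid
      (Finset.image₂ (fun u f => u + u - f) F F)).eventually (eventually_lt_nhds hε)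
    have e5 : ∀ᶠ N in atTop, ∀ f ∈ F,
        ((((Φ N).image (fun x => f + x)) \ Φ N).card : ℝ) / ((Φ N).card : ℝ) < ε := by
      rw [Filter.eventually_all_finset]
      intro f _
      exact (folner_err hΦ f).eventually (eventually_lt_nhds hε)
    filter_upwards [e1, e2, e3, e4, e5] with N h1 h2 h3 h4 h5
    exact ⟨h1, h2, h3, h4, h5⟩
  obtain ⟨N, hψN, hM, hcard, h3, h4, h5⟩ := (hfreq.and_eventually hev).exists
  have hcR : (0:ℝ) < ((Φ N).card : ℝ) := by exact_mod_cast hcard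
  refine ⟨N, hM, hcard, ?_, ?_, ?_, ?_⟩
  · rwa [div_lt_iff₀ hcR] at hψN
  · rwa [div_lt_iff₀ hcR] at h3
  · rwa [div_lt_iff₀ hcR] at h4
  · intro f hf
    have := h5 f hf
    rwa [div_lt_iff₀ hcR] at this


end Aux

section Main

variable {G : Type*} [AddCommGroup G] [Infinite G] {Φ : ℕ → Finset G}

/-- the `ε` used at stage with history `l` -/
noncomputable def epsl (Φ : ℕ → Finset G) (l : List ℕ) : ℝ :=
  1 / (((l.length : ℝ) + 1) * (2 * (((l.toFinset.biUnion Φ).card : ℝ) + 2)))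

lemma epsl_pos (Φ : ℕ → Finset G) (l : List ℕ) : 0 < epsl Φ l := by
  unfold epsl; positivity

variable (hΦ : IsFolner Φ) (h2 : (Set.range (doubleHom G)).Infinite)
  (hψ : liminf (fun N =>
      (((Φ N).filter (fun x => x + x ∈ Φ N)).card : ℝ) / ((Φ N).card : ℝ)) atTop = 0)

/-- the chooser -/
noncomputable def stepF : List ℕ → ℕ := fun l =>
  (exists_good hΦ h2 hψ (l.foldr max 0 + 1) (l.toFinset.biUnion Φ)
    (epsl Φ l) (epsl_pos Φ l)).choose

lemma stepF_spec (l : List ℕ) :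
    (l.foldr max 0 + 1) ≤ stepF hΦ h2 hψ l ∧ 0 < (Φ (stepF hΦ h2 hψ l)).card ∧
      ((((Φ (stepF hΦ h2 hψ l)).filter (fun x => x + x ∈ Φ (stepF hΦ h2 hψ l))).card : ℝ)
        < epsl Φ l * ((Φ (stepF hΦ h2 hψ l)).card : ℝ)) ∧
      ((((Φ (stepF hΦ h2 hψ l)).filter (fun x => doubleHom G x ∈
          l.toFinset.biUnion Φ + l.toFinset.biUnion Φ)).card : ℝ)
        < epsl Φ l * ((Φ (stepF hΦ h2 hψ l)).card : ℝ)) ∧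
      ((((Φ (stepF hΦ h2 hψ l)).filter (fun x => (AddMonoidHom.id G) x ∈
          Finset.image₂ (fun u f => u + u - f) (l.toFinset.biUnion Φ)
            (l.toFinset.biUnion Φ))).card : ℝ)
        < epsl Φ l * ((Φ (stepF hΦ h2 hψ l)).card : ℝ)) ∧
      (∀ f ∈ l.toFinset.biUnion Φ,
        ((((Φ (stepF hΦ h2 hψ l)).image (fun x => f + x)) \ Φ (stepF hΦ h2 hψ l)).card : ℝ)
          < epsl Φ l * ((Φ (stepF hΦ h2 hψ l)).card : ℝ)) :=
  (exists_good hΦ h2 hψ (l.foldr max 0 + 1) (l.toFinset.biUnion Φ)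
    (epsl Φ l) (epsl_pos Φ l)).choose_spec

/-- the chosen subsequence -/
noncomputable def NN : ℕ → ℕ := fun n => stepF hΦ h2 hψ (seqData (stepF hΦ h2 hψ) n)

/-- union of all previous Følner sets -/
noncomputable def FFn : ℕ → Finset G := fun n =>
  (seqData (stepF hΦ h2 hψ) n).toFinset.biUnion Φ

/-- the bad (removed) points at stage n -/
def BadP (Fn Phin : Finset G) (x : G) : Prop :=
  (∃ f ∈ Fn, ∃ g ∈ Fn, x + x = f + g) ∨
  (∃ u ∈ Fn, ∃ f ∈ Fn, x = u + u - f) ∨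
  (∃ f ∈ Fn, ∃ w ∈ Phin, x = w + w - f)

noncomputable def Afin : ℕ → Finset G := fun n =>
  (Φ (NN hΦ h2 hψ n)).filter (fun x => ¬ BadP (FFn hΦ h2 hψ n) (Φ (NN hΦ h2 hψ n)) x)

noncomputable def Aset : Set G := ⋃ n, ((Afin hΦ h2 hψ n : Finset G) : Set G)

end Main

section Main2
set_option linter.unusedSectionVars false

variable {G : Type*} [AddCommGroup G] [Infinite G] {Φ : ℕ → Finset G}
variable (hΦ : IsFolner Φ) (h2 : (Set.range (doubleHom G)).Infinite)
  (hψ : liminf (fun N =>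
      (((Φ N).filter (fun x => x + x ∈ Φ N)).card : ℝ) / ((Φ N).card : ℝ)) atTop = 0)

lemma seqData_length (step : List ℕ → ℕ) (n : ℕ) : (seqData step n).length = n := by
  rw [seqData_eq, List.length_map, List.length_range]

lemma NN_mem_seqData {k n : ℕ} (hkn : k < n) :
    NN hΦ h2 hψ k ∈ seqData (stepF hΦ h2 hψ) n := by
  rw [seqData_eq]
  exact List.mem_map.mpr ⟨k, List.mem_range.mpr hkn, rfl⟩

lemma Phi_sub_FFn {k n : ℕ} (hkn : k < n) : Φ (NN hΦ h2 hψ k) ⊆ FFn hΦ h2 hψ n := by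
  intro x hx
  exact Finset.mem_biUnion.mpr ⟨NN hΦ h2 hψ k,
    List.mem_toFinset.mpr (NN_mem_seqData hΦ h2 hψ hkn), hx⟩

lemma NN_strictMono : StrictMono (NN hΦ h2 hψ) := by
  apply strictMono_nat_of_lt_succ
  intro n
  have h1 : NN hΦ h2 hψ n ∈ seqData (stepF hΦ h2 hψ) (n+1) := NN_mem_seqData hΦ h2 hψ (by omega)
  have h2' := mem_le_foldr_max _ _ h1
  have h3 := (stepF_spec hΦ h2 hψ (seqData (stepF hΦ h2 hψ) (n+1))).1
  calc NN hΦ h2 hψ n ≤ (seqData (stepF hΦ h2 hψ) (n+1)).foldr max 0 := h2'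
    _ < NN hΦ h2 hψ (n+1) := by
        have : (seqData (stepF hΦ h2 hψ) (n+1)).foldr max 0 + 1 ≤ NN hΦ h2 hψ (n+1) := h3
        omega

lemma Afin_subset (n : ℕ) : Afin hΦ h2 hψ n ⊆ Φ (NN hΦ h2 hψ n) := Finset.filter_subset _ _

lemma Afin_card_lower (n : ℕ) :
    ((Φ (NN hΦ h2 hψ n)).card : ℝ) - ((Φ (NN hΦ h2 hψ n)).card : ℝ)/((n:ℝ)+1)
      ≤ ((Afin hΦ h2 hψ n).card : ℝ) := by
  set l := seqData (stepF hΦ h2 hψ) n with hl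
  set N := NN hΦ h2 hψ n with hN
  obtain ⟨-, hcpos, hψc, hc2, hc3, hc4⟩ := stepF_spec hΦ h2 hψ l
  set F : Finset G := l.toFinset.biUnion Φ with hF
  set ε : ℝ := epsl Φ l with hε
  have hεval : ε = 1 / (((n : ℝ) + 1) * (2 * ((F.card : ℝ) + 2))) := by
    rw [hε, epsl, seqData_length]
  have hεpos : 0 < ε := epsl_pos Φ l
  have hPhiN : Φ (stepF hΦ h2 hψ l) = Φ N := rfl
  set c : ℝ := ((Φ N).card : ℝ) with hc
  have hcpos' : (0:ℝ) < c := by rw [hc]; exact_mod_cast hcpos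
  set rem := (Φ N).filter (fun x => BadP F (Φ N) x) with hrem
  have hsplit : (rem.card : ℝ) + ((Afin hΦ h2 hψ n).card : ℝ) = c := by
    have hAfin : Afin hΦ h2 hψ n = (Φ N).filter (fun x => ¬ BadP F (Φ N) x) := rfl
    have hnat : rem.card + (Afin hΦ h2 hψ n).card = (Φ N).card := by
      rw [hAfin, hrem]
      exact Finset.card_filter_add_card_filter_not (s := Φ N)
        (p := fun x => BadP F (Φ N) x)
    rw [hc]
    exact_mod_cast hnat
  -- covering of rem
  set f2 := (Φ N).filter (fun x => doubleHom G x ∈ F + F) with hf2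
  set f3 := (Φ N).filter (fun x => (AddMonoidHom.id G) x ∈
      Finset.image₂ (fun u f => u + u - f) F F) with hf3
  set f4 := F.biUnion (fun f => (Φ N).filter (fun x => ∃ w ∈ Φ N, x = w + w - f)) with hf4
  have hsub : rem ⊆ f2 ∪ f3 ∪ f4 := by
    intro x hx
    rw [hrem, Finset.mem_filter] at hx
    obtain ⟨hxΦ, hbad⟩ := hx
    rcases hbad with ⟨f, hf, g, hg, hfg⟩ | ⟨u, hu, f, hf, hx⟩ | ⟨f, hf, w, hw, hx⟩
    · apply Finset.mem_union_left; apply Finset.mem_union_left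
      rw [hf2, Finset.mem_filter]
      exact ⟨hxΦ, Finset.mem_add.mpr ⟨f, hf, g, hg, hfg.symm⟩⟩
    · apply Finset.mem_union_left; apply Finset.mem_union_right
      rw [hf3, Finset.mem_filter]
      exact ⟨hxΦ, Finset.mem_image₂.mpr ⟨u, hu, f, hf, hx.symm⟩⟩
    · apply Finset.mem_union_right
      rw [hf4, Finset.mem_biUnion]
      exact ⟨f, hf, Finset.mem_filter.mpr ⟨hxΦ, w, hw, hx⟩⟩
  have hf4card : (f4.card : ℝ) ≤ (F.card : ℝ) * (2 * (ε * c)) := by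
    have h1 : f4.card ≤ ∑ f ∈ F, ((Φ N).filter (fun x => ∃ w ∈ Φ N, x = w + w - f)).card :=
      Finset.card_biUnion_le
    have h2' : ∀ f ∈ F, (((Φ N).filter (fun x => ∃ w ∈ Φ N, x = w + w - f)).card : ℝ)
        ≤ 2 * (ε * c) := by
      intro f hf
      have hy := yside_card (Φ N) f
      have hb1 : (((Φ N).filter (fun w => w + w ∈ Φ N)).card : ℝ) < ε * c := hψc
      have hb2 : ((((Φ N).image (fun x => f + x)) \ Φ N).card : ℝ) < ε * c := hc4 f hf
      have := (Nat.cast_le (α := ℝ)).mpr hy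
      push_cast at this
      linarith
    calc (f4.card : ℝ) ≤ ∑ f ∈ F, (((Φ N).filter (fun x => ∃ w ∈ Φ N, x = w + w - f)).card : ℝ) := by
          exact_mod_cast h1
      _ ≤ ∑ _f ∈ F, 2 * (ε * c) := Finset.sum_le_sum h2'
      _ = (F.card : ℝ) * (2 * (ε * c)) := by rw [Finset.sum_const, nsmul_eq_mul]
  have hremcard : (rem.card : ℝ) ≤ c / ((n:ℝ)+1) := by
    have h1 : (rem.card : ℝ) ≤ (f2.card : ℝ) + (f3.card : ℝ) + (f4.card : ℝ) := by
      have := Finset.card_le_card hsub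
      have h2' := (Finset.card_union_le (f2 ∪ f3) f4)
      have h3' := Finset.card_union_le f2 f3
      have := this.trans h2'
      have : rem.card ≤ f2.card + f3.card + f4.card := by omega
      exact_mod_cast this
    have h2c : (f2.card : ℝ) < ε * c := hc2
    have h3c : (f3.card : ℝ) < ε * c := hc3
    have htot : (rem.card : ℝ) ≤ (2 + 2 * (F.card : ℝ)) * (ε * c) := by nlinarith
    have hεle : (2 + 2 * (F.card : ℝ)) * ε ≤ 1 / ((n:ℝ)+1) := by
      rw [hεval, mul_one_div, div_le_div_iff₀ (by positivity) (by positivity)]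
      have hn0 : (0:ℝ) ≤ (n:ℝ) := Nat.cast_nonneg n
      nlinarith [Nat.cast_nonneg (α := ℝ) F.card]
    calc (rem.card : ℝ) ≤ (2 + 2 * (F.card : ℝ)) * (ε * c) := htot
      _ = ((2 + 2 * (F.card : ℝ)) * ε) * c := by ring
      _ ≤ (1 / ((n:ℝ)+1)) * c := by
          apply mul_le_mul_of_nonneg_right hεle hcpos'.le
      _ = c / ((n:ℝ)+1) := by ring
  linarith

end Main2

theorem stmt19 (G : Type*) [AddCommGroup G] [Countable G]
    (h2inf : (twoG G : Set G).Infinite)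
    (Φ : ℕ → Finset G) (hΦ : IsFolner Φ)
    (hnq : Filter.liminf (fun N =>
        (((((fun x : G => x + x) ⁻¹' (Φ N : Set G)) ∩ (Φ N : Set G)).ncard : ℝ) /
          ((Φ N).card : ℝ))) atTop = 0) :
    ∃ A : Set G,
      Filter.limsup (fun N => ((A ∩ (Φ N : Set G)).ncard : ℝ) / ((Φ N).card : ℝ))
        atTop = 1 ∧
      ∀ t : G, ∀ B : Set G, B.Infinite → ¬ (({t} : Set G) + B + B ⊆ A) := by
  have hGuniv : (Set.univ : Set G).Infinite := h2inf.mono (Set.subset_univ _)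
  haveI hGinf : Infinite G := Set.infinite_univ_iff.mp hGuniv
  have h2 : (Set.range (doubleHom G)).Infinite := by
    have he : ((twoG G : AddSubgroup G) : Set G) = Set.range (doubleHom G) := by
      rw [twoG]; rfl
    rwa [he] at h2inf
  have hψ : liminf (fun N =>
      (((Φ N).filter (fun x => x + x ∈ Φ N)).card : ℝ) / ((Φ N).card : ℝ)) atTop = 0 := by
    rw [← hnq]
    congr 1
    funext N
    have hset : ((fun x : G => x + x) ⁻¹' (Φ N : Set G)) ∩ (Φ N : Set G)
        = (((Φ N).filter (fun x => x + x ∈ Φ N)) : Set G) := by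
      ext x
      simp only [Set.mem_inter_iff, Set.mem_preimage, Finset.coe_filter, Set.mem_setOf_eq,
        Finset.mem_coe]
      tauto
    rw [hset, Set.ncard_coe_finset]
  set A : Set G := Aset hΦ h2 hψ with hA
  have hmemA : ∀ x : G, x ∈ A ↔ ∃ n, x ∈ Afin hΦ h2 hψ n := by
    intro x
    rw [hA, Aset]
    simp [Set.mem_iUnion]
  refine ⟨A, ?_, ?_⟩
  · -- limsup = 1
    have hub : ∀ N, ((A ∩ (Φ N : Set G)).ncard : ℝ) / ((Φ N).card : ℝ) ≤ 1 := by
      intro N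
      rcases Nat.eq_zero_or_pos (Φ N).card with h0 | hpos
      · rw [h0]; norm_num
      · apply div_le_one_of_le₀
        · have hsubN : A ∩ (Φ N : Set G) ⊆ (Φ N : Set G) := Set.inter_subset_right
          have := Set.ncard_le_ncard hsubN (Φ N).finite_toSet
          rw [Set.ncard_coe_finset] at this
          exact_mod_cast this
        · positivity
    have hbddA : IsBoundedUnder (· ≤ ·) atTop
        (fun N => ((A ∩ (Φ N : Set G)).ncard : ℝ) / ((Φ N).card : ℝ)) :=
      isBoundedUnder_of ⟨1, hub⟩
    have hlb : ∀ n : ℕ, 1 - 1/((n:ℝ)+1)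
        ≤ ((A ∩ (Φ (NN hΦ h2 hψ n) : Set G)).ncard : ℝ) / ((Φ (NN hΦ h2 hψ n)).card : ℝ) := by
      intro n
      have hc : 0 < (Φ (NN hΦ h2 hψ n)).card :=
        (stepF_spec hΦ h2 hψ (seqData (stepF hΦ h2 hψ) n)).2.1
      have hcR : (0:ℝ) < ((Φ (NN hΦ h2 hψ n)).card : ℝ) := by exact_mod_cast hc
      have hsubA : ((Afin hΦ h2 hψ n : Finset G) : Set G)
          ⊆ A ∩ (Φ (NN hΦ h2 hψ n) : Set G) := by
        intro x hx
        rw [Finset.mem_coe] at hx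
        exact ⟨(hmemA x).mpr ⟨n, hx⟩, Finset.mem_coe.mpr (Afin_subset hΦ h2 hψ n hx)⟩
      have hfinA : (A ∩ (Φ (NN hΦ h2 hψ n) : Set G)).Finite :=
        Set.Finite.subset (Φ _).finite_toSet Set.inter_subset_right
      have hn1 : ((Afin hΦ h2 hψ n).card : ℝ)
          ≤ ((A ∩ (Φ (NN hΦ h2 hψ n) : Set G)).ncard : ℝ) := by
        have := Set.ncard_le_ncard hsubA hfinA
        rw [Set.ncard_coe_finset] at this
        exact_mod_cast this
      have hlow := Afin_card_lower hΦ h2 hψ n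
      rw [le_div_iff₀ hcR]
      have hring : (1 - 1/((n:ℝ)+1)) * ((Φ (NN hΦ h2 hψ n)).card : ℝ)
          = ((Φ (NN hΦ h2 hψ n)).card : ℝ) - ((Φ (NN hΦ h2 hψ n)).card : ℝ)/((n:ℝ)+1) := by
        ring
      rw [hring]
      linarith
    apply le_antisymm
    · exact limsup_le_of_le (isCoboundedUnder_le_of_le atTop (x := 0)
        (fun N => by positivity)) (Eventually.of_forall hub)
    · by_contra hlt
      push_neg at hlt
      set L := limsup (fun N => ((A ∩ (Φ N : Set G)).ncard : ℝ) / ((Φ N).card : ℝ)) atTop with hL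
      have hδ : 0 < (1 - L)/2 := by linarith
      obtain ⟨n₀, hn₀⟩ := exists_nat_one_div_lt hδ
      have hfreqle : ∃ᶠ N in atTop, 1 - (1 - L)/2
          ≤ ((A ∩ (Φ N : Set G)).ncard : ℝ) / ((Φ N).card : ℝ) := by
        rw [frequently_atTop]
        intro a
        set M : ℕ := max a n₀ with hM
        refine ⟨NN hΦ h2 hψ M, ?_, ?_⟩
        · exact le_trans (le_max_left a n₀) ((NN_strictMono hΦ h2 hψ).le_apply)
        · have h1 := hlb M
          have h2' : 1/((M:ℝ)+1) ≤ 1/((n₀:ℝ)+1) := by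
            apply one_div_le_one_div_of_le (by positivity)
            have : (n₀:ℝ) ≤ (M : ℝ) := by exact_mod_cast le_max_right a n₀
            linarith
          linarith
      have := le_limsup_of_frequently_le hfreqle hbddA
      linarith
  · -- no B + B + t
    rintro t B hBinf hsubBA
    have hmemBA : ∀ b₁ ∈ B, ∀ b₂ ∈ B, t + b₁ + b₂ ∈ A := by
      intro b₁ hb₁ b₂ hb₂
      apply hsubBA
      exact Set.add_mem_add (Set.add_mem_add (Set.mem_singleton t) hb₁) hb₂
    by_cases hcase : ∃ c : G, (B ∩ {x : G | x + x = c}).Infinite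
    · -- some doubling-fiber of B is infinite
      obtain ⟨c, hc⟩ := hcase
      obtain ⟨b₀, hb₀⟩ := hc.nonempty
      set S : Set G := (fun b => t + b₀ + b) '' (B ∩ {x : G | x + x = c}) with hS
      have hSinf : S.Infinite := hc.image (Set.injOn_of_injective (add_right_injective (t + b₀)))
      have hSA : S ⊆ A := by
        rintro _ ⟨b, hb, rfl⟩
        exact hmemBA b₀ hb₀.1 b hb.1
      have hSfib : ∀ x ∈ S, x + x = t + t + c + c := by
        rintro _ ⟨b, hb, rfl⟩
        have h1 : b₀ + b₀ = c := hb₀.2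
        have h2' : b + b = c := hb.2
        calc (t + b₀ + b) + (t + b₀ + b) = t + t + (b₀ + b₀) + (b + b) := by abel
          _ = t + t + c + c := by rw [h1, h2']
      obtain ⟨x₀, hx₀S⟩ := hSinf.nonempty
      obtain ⟨n₀, hx₀⟩ := (hmemA x₀).mp (hSA hx₀S)
      set T : Finset G := (Finset.range (n₀+1)).biUnion (Afin hΦ h2 hψ) with hT
      have hS'inf : (S \ (T : Set G)).Infinite := hSinf.diff T.finite_toSet
      obtain ⟨y, hyS, hyT⟩ := hS'inf.nonempty
      obtain ⟨m, hym⟩ := (hmemA y).mp (hSA hyS)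
      have hmgt : n₀ < m := by
        by_contra hle
        push_neg at hle
        exact hyT (Finset.mem_coe.mpr (Finset.mem_biUnion.mpr
          ⟨m, Finset.mem_range.mpr (by omega), hym⟩))
      have hyBad : ¬ BadP (FFn hΦ h2 hψ m) (Φ (NN hΦ h2 hψ m)) y :=
        (Finset.mem_filter.mp hym).2
      apply hyBad
      left
      refine ⟨x₀, ?_, x₀, ?_, ?_⟩
      · exact Phi_sub_FFn hΦ h2 hψ hmgt (Afin_subset hΦ h2 hψ n₀ hx₀)
      · exact Phi_sub_FFn hΦ h2 hψ hmgt (Afin_subset hΦ h2 hψ n₀ hx₀)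
      · rw [hSfib y hyS, hSfib x₀ hx₀S]
    · -- all doubling-fibers of B are finite
      push_neg at hcase
      -- stage function
      have hex : ∀ b ∈ B, ∃ n, t + b + b ∈ Afin hΦ h2 hψ n := by
        intro b hb
        exact (hmemA _).mp (hmemBA b hb b hb)
      set idx : G → ℕ := fun b =>
        if h : ∃ n, t + b + b ∈ Afin hΦ h2 hψ n then h.choose else 0 with hidxdef
      have hidx : ∀ b ∈ B, t + b + b ∈ Afin hΦ h2 hψ (idx b) := by
        intro b hb
        have h := hex b hb
        simp only [hidxdef, dif_pos h]
        exact h.choose_spec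
      have hbig : ∀ n₁ : ℕ, ∃ b ∈ B, n₁ < idx b := by
        intro n₁
        by_contra hcon
        push_neg at hcon
        have hBsub : B ⊆ ⋃ n ∈ Finset.range (n₁+1), ⋃ a ∈ Afin hΦ h2 hψ n,
            (B ∩ {x : G | x + x = a - t}) := by
          intro b hb
          have h1 : idx b ≤ n₁ := hcon b hb
          have h2' : t + b + b ∈ Afin hΦ h2 hψ (idx b) := hidx b hb
          have hmem2 : b ∈ ⋃ a ∈ Afin hΦ h2 hψ (idx b), (B ∩ {x : G | x + x = a - t}) :=
            Set.mem_biUnion h2' ⟨hb, show b + b = (t + b + b) - t by abel⟩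
          exact Set.mem_biUnion (Finset.mem_range.mpr (show idx b < n₁ + 1 by omega)) hmem2
        have hBfin : B.Finite := by
          apply Set.Finite.subset ?_ hBsub
          apply Set.Finite.biUnion (Finset.range (n₁+1)).finite_toSet
          intro n _
          apply Set.Finite.biUnion (Afin hΦ h2 hψ n).finite_toSet
          intro a _
          exact hcase (a - t)
        exact hBinf hBfin
      obtain ⟨b, hbB⟩ := hBinf.nonempty
      obtain ⟨b', hb'B, hkk'⟩ := hbig (idx b)
      set k := idx b with hk
      set k' := idx b' with hk'
      have ha : t + b + b ∈ Afin hΦ h2 hψ k := hidx b hbB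
      have ha' : t + b' + b' ∈ Afin hΦ h2 hψ k' := hidx b' hb'B
      obtain ⟨n, hxn⟩ := (hmemA (t + b + b')).mp (hmemBA b hbB b' hb'B)
      have hxΦ : t + b + b' ∈ Φ (NN hΦ h2 hψ n) := Afin_subset hΦ h2 hψ n hxn
      have haΦ : t + b + b ∈ Φ (NN hΦ h2 hψ k) := Afin_subset hΦ h2 hψ k ha
      have ha'Φ : t + b' + b' ∈ Φ (NN hΦ h2 hψ k') := Afin_subset hΦ h2 hψ k' ha'
      rcases lt_trichotomy n k' with hlt | heq | hgt
      · -- n < k' : a' is bad at stage k' via pattern (iii)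
        have hBad : ¬ BadP (FFn hΦ h2 hψ k') (Φ (NN hΦ h2 hψ k')) (t + b' + b') :=
          (Finset.mem_filter.mp ha').2
        apply hBad
        right; left
        refine ⟨t + b + b', Phi_sub_FFn hΦ h2 hψ hlt hxΦ,
          t + b + b, Phi_sub_FFn hΦ h2 hψ hkk' haΦ, ?_⟩
        abel
      · -- n = k' : a' is bad at stage k' via pattern (iv)
        have hBad : ¬ BadP (FFn hΦ h2 hψ k') (Φ (NN hΦ h2 hψ k')) (t + b' + b') :=
          (Finset.mem_filter.mp ha').2
        apply hBad
        right; right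
        refine ⟨t + b + b, Phi_sub_FFn hΦ h2 hψ hkk' haΦ,
          t + b + b', heq ▸ hxΦ, ?_⟩
        abel
      · -- k' < n : x is bad at stage n via pattern (i)
        have hBad : ¬ BadP (FFn hΦ h2 hψ n) (Φ (NN hΦ h2 hψ n)) (t + b + b') :=
          (Finset.mem_filter.mp hxn).2
        apply hBad
        left
        refine ⟨t + b + b, Phi_sub_FFn hΦ h2 hψ (lt_trans hkk' hgt) haΦ,
          t + b' + b', Phi_sub_FFn hΦ h2 hψ hgt ha'Φ, ?_⟩
        abel
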